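/- Let μ_1, β_1, C', A, L_+ > 0 and τ̄ ∈ ℕ, and set μ_k = μ_1/√k and β_k = β_1/k^{1/4} for k ≥ 1. Let (b_k)_{k≥1} be a bounded sequence of nonnegative reals and (a_k)_{k≥1} a sequence with 0 ≤ a_k ≤ L_+ / k^{1/4} for all k ≥ 1, such that b_k ≤ (1 − μ_k β_k − μ_k A)·b_{k−1} + μ_k·a_{k−1} + C'·μ_k·μ_{k−τ̄} for all k > τ̄ + 1. Then there exists a constant L > 0 such that b_k ≤ L / k^{1/4} for all k ≥ 1. -/

import Mathlib

set_option maxHeartbeats 1000000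

/-- In-band error decay lemma for diminishing stepsizes `μ_k = μ_1/√k`
and decay factors `β_k = β_1/k^{1/4}`: if `a_k ≤ L_+/k^{1/4}` and the bounded
nonnegative sequence `b` satisfies
`b_k ≤ (1 − μ_kβ_k − μ_kA)b_{k−1} + μ_ka_{k−1} + C'μ_kμ_{k−τ̄}` for `k > τ̄ + 1`,
then `b_k ≤ L/k^{1/4}` for some constant `L > 0`. -/
theorem in_band_decay_diminishing_stepsize
    (μ1 β1 C' A Lp : ℝ) (hμ1 : 0 < μ1) (hβ1 : 0 < β1) (hC' : 0 < C')
    (hA : 0 < A) (hLp : 0 < Lp) (τbar : ℕ)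
    (b : ℕ → ℝ) (hb : ∀ k, 0 ≤ b k) (hbd : ∃ Bd : ℝ, ∀ k, b k ≤ Bd)
    (a : ℕ → ℝ)
    (ha : ∀ k : ℕ, 1 ≤ k → 0 ≤ a k ∧ a k ≤ Lp / (k : ℝ) ^ ((1 : ℝ) / 4))
    (hrec : ∀ k : ℕ, τbar + 1 < k →
      b k ≤ (1 - (μ1 / Real.sqrt (k : ℝ)) * (β1 / (k : ℝ) ^ ((1 : ℝ) / 4)) -
          (μ1 / Real.sqrt (k : ℝ)) * A) * b (k - 1) +
        (μ1 / Real.sqrt (k : ℝ)) * a (k - 1) +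
        C' * (μ1 / Real.sqrt (k : ℝ)) * (μ1 / Real.sqrt ((k - τbar : ℕ) : ℝ))) :
    ∃ L > (0 : ℝ), ∀ k : ℕ, 1 ≤ k → b k ≤ L / (k : ℝ) ^ ((1 : ℝ) / 4) := by
  obtain ⟨Bd, hBd⟩ := hbd
  have hBd0 : 0 ≤ Bd := le_trans (hb 0) (hBd 0)
  set R : ℝ := (4 / (μ1 * A)) ^ 2 + (2 * μ1 * (β1 + A)) ^ 2 with hRdef
  set K : ℕ := ⌈R⌉₊ + 2 * τbar + 2 with hKdef
  have hK1 : 1 ≤ K := by omega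
  have hKR : R ≤ (K : ℝ) := by
    have h1 : R ≤ (⌈R⌉₊ : ℝ) := Nat.le_ceil R
    have h2 : ⌈R⌉₊ ≤ K := by omega
    have h3 : (⌈R⌉₊ : ℝ) ≤ (K : ℝ) := by exact_mod_cast h2
    linarith only [h1, h3]
  have hKτ : 2 * τbar + 2 ≤ K := by omega
  set L : ℝ := max 1 (Bd * (K : ℝ) ^ ((1 : ℝ) / 4)) + (8 * Lp + 8 * C' * μ1) / A with hLdef
  clear_value R K L
  have hmax1 : (1 : ℝ) ≤ max 1 (Bd * (K : ℝ) ^ ((1 : ℝ) / 4)) := le_max_left _ _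
  have htail : 0 ≤ (8 * Lp + 8 * C' * μ1) / A := by positivity
  have hL0 : 0 < L := by rw [hLdef]; linarith only [hmax1, htail]
  have hLBd : Bd * (K : ℝ) ^ ((1 : ℝ) / 4) ≤ L := by
    have h := le_max_right 1 (Bd * (K : ℝ) ^ ((1 : ℝ) / 4))
    rw [hLdef]; linarith only [h, htail]
  have hAL : 8 * Lp + 8 * C' * μ1 ≤ A * L := by
    have h : (8 * Lp + 8 * C' * μ1) / A ≤ L := by
      rw [hLdef]; linarith only [hmax1]
    calc 8 * Lp + 8 * C' * μ1 = A * ((8 * Lp + 8 * C' * μ1) / A) := by field_simp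
      _ ≤ A * L := mul_le_mul_of_nonneg_left h hA.le
  have hALp : 8 * Lp ≤ A * L := by
    have h8 : (0:ℝ) < 8 * C' * μ1 := by positivity
    linarith only [hAL, h8]
  have hALC : 8 * C' * μ1 ≤ A * L := by
    have h8 : (0:ℝ) < 8 * Lp := by positivity
    linarith only [hAL, h8]
  refine ⟨L, hL0, ?_⟩
  -- base bound: for 1 ≤ k ≤ K
  have hbase : ∀ k : ℕ, 1 ≤ k → k ≤ K → b k ≤ L / (k : ℝ) ^ ((1 : ℝ) / 4) := by
    intro k hk1 hkK
    have hk0 : (0 : ℝ) < (k : ℝ) := by exact_mod_cast hk1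
    have hp0 : (0 : ℝ) < (k : ℝ) ^ ((1 : ℝ) / 4) := Real.rpow_pos_of_pos hk0 _
    rw [le_div_iff₀ hp0]
    have hpk : (k : ℝ) ^ ((1 : ℝ) / 4) ≤ (K : ℝ) ^ ((1 : ℝ) / 4) :=
      Real.rpow_le_rpow hk0.le (by exact_mod_cast hkK) (by norm_num)
    calc b k * (k : ℝ) ^ ((1 : ℝ) / 4) ≤ Bd * (K : ℝ) ^ ((1 : ℝ) / 4) :=
          mul_le_mul (hBd k) hpk hp0.le hBd0
      _ ≤ L := hLBd
  -- main induction for k ≥ K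
  have main : ∀ k : ℕ, K ≤ k → b k ≤ L / (k : ℝ) ^ ((1 : ℝ) / 4) := by
    intro k hk
    induction k, hk using Nat.le_induction with
    | base => exact hbase K hK1 le_rfl
    | succ k hKk ih =>
      have hk1 : 1 ≤ k := le_trans hK1 hKk
      have hτk : τbar + 1 < k + 1 := by omega
      have hrek := hrec (k + 1) hτk
      simp only [Nat.add_sub_cancel] at hrek
      have hτle : τbar ≤ k + 1 := by omega
      have hcastτ : ((k + 1 - τbar : ℕ) : ℝ) = (k : ℝ) + 1 - (τbar : ℝ) := by
        rw [Nat.cast_sub hτle]; push_cast; ring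
      push_cast at hrek ⊢
      rw [hcastτ] at hrek
      set kr : ℝ := (k : ℝ) with hkr
      have hkrK : (K : ℝ) ≤ kr := by rw [hkr]; exact_mod_cast hKk
      have hkr1 : (1 : ℝ) ≤ kr := by rw [hkr]; exact_mod_cast hk1
      have hkrτ : 2 * (τbar : ℝ) + 2 ≤ kr := by
        have h := le_trans hKτ hKk
        rw [hkr]; exact_mod_cast h
      have hRkr : R ≤ kr := le_trans hKR hkrK
      rw [hRdef] at hRkr
      have hmr1 : (1 : ℝ) ≤ kr + 1 := by linarith only [hkr1]
      have hmr0 : (0 : ℝ) < kr + 1 := by linarith only [hkr1]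
      have hτ0 : (0 : ℝ) ≤ (τbar : ℝ) := Nat.cast_nonneg _
      set s : ℝ := Real.sqrt (kr + 1) with hs
      set p : ℝ := (kr + 1) ^ ((1 : ℝ) / 4) with hp
      set p' : ℝ := kr ^ ((1 : ℝ) / 4) with hp'
      set st : ℝ := Real.sqrt (kr + 1 - (τbar : ℝ)) with hst
      clear_value kr s p p' st
      have hs0 : 0 < s := by rw [hs]; exact Real.sqrt_pos.mpr hmr0
      have hss : s * s = kr + 1 := by rw [hs]; exact Real.mul_self_sqrt hmr0.le
      have hp0 : 0 < p := by rw [hp]; exact Real.rpow_pos_of_pos hmr0 _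
      have hp'0 : 0 < p' := by rw [hp']; exact Real.rpow_pos_of_pos (by linarith only [hkr1]) _
      have hp1 : 1 ≤ p := by rw [hp]; exact Real.one_le_rpow hmr1 (by norm_num)
      have hp'1 : 1 ≤ p' := by rw [hp']; exact Real.one_le_rpow hkr1 (by norm_num)
      have hpp : p * p = s := by
        rw [hp, hs, ← Real.rpow_add hmr0, Real.sqrt_eq_rpow]
        norm_num
      have hst0 : 0 < st := by rw [hst]; exact Real.sqrt_pos.mpr (by linarith only [hkrτ, hτ0])
      have hsthalf : s / 2 ≤ st := by
        rw [hst, Real.le_sqrt (by linarith only [hs0]) (by linarith only [hkrτ, hτ0])]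
        nlinarith only [hss, hkrτ, hτ0]
      have hB4 : 4 ≤ μ1 * A * s := by
        have h1 : (4 / (μ1 * A)) ^ 2 ≤ kr + 1 := by
          have hsq : (0:ℝ) ≤ (2 * μ1 * (β1 + A)) ^ 2 := sq_nonneg _
          linarith only [hRkr, hsq]
        have h2 : 4 / (μ1 * A) ≤ s := by
          rw [hs]
          have h3 := Real.sqrt_le_sqrt h1
          rwa [Real.sqrt_sq (by positivity)] at h3
        have hμA : 0 < μ1 * A := mul_pos hμ1 hA
        have h4 := (div_le_iff₀ hμA).mp h2
        linarith only [h4]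
      have hC2 : 2 * μ1 * (β1 + A) ≤ s := by
        have h1 : (2 * μ1 * (β1 + A)) ^ 2 ≤ kr + 1 := by
          have hsq : (0:ℝ) ≤ (4 / (μ1 * A)) ^ 2 := sq_nonneg _
          linarith only [hRkr, hsq]
        rw [hs]
        have h3 := Real.sqrt_le_sqrt h1
        rwa [Real.sqrt_sq (by positivity)] at h3
      -- coefficient bounds
      have hβp : 0 ≤ (μ1 / s) * (β1 / p) := by positivity
      have hβps : (μ1 / s) * (β1 / p) ≤ μ1 * β1 / s := by
        have h1 : β1 / p ≤ β1 := div_le_self hβ1.le hp1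
        have h2 : 0 ≤ μ1 / s := by positivity
        calc (μ1 / s) * (β1 / p) ≤ (μ1 / s) * β1 := mul_le_mul_of_nonneg_left h1 h2
          _ = μ1 * β1 / s := by ring
      have hhalf : μ1 * β1 / s + μ1 * A / s ≤ 1 / 2 := by
        rw [← add_div, div_le_iff₀ hs0]
        linarith only [hC2]
      have heq : (μ1 / s) * A = μ1 * A / s := by ring
      have hc0 : 0 ≤ 1 - (μ1 / s) * (β1 / p) - (μ1 / s) * A := by
        linarith only [hβps, hhalf, heq]
      have hc1 : 1 - (μ1 / s) * (β1 / p) - (μ1 / s) * A ≤ 1 - μ1 * A / s := by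
        linarith only [hβp, heq]
      have ht0 : 0 ≤ μ1 * A / s := by positivity
      have hβs0 : 0 < μ1 * β1 / s := by positivity
      have ht12 : μ1 * A / s ≤ 1 / 2 := by linarith only [hhalf, hβs0]
      -- p ≤ p' * (1 + 2/(kr+1)) and p ≤ 2 p'
      have hkey0 : kr + 1 ≤ kr * (1 + 2 / (kr + 1)) := by
        rw [show kr * (1 + 2 / (kr + 1)) = (kr * (kr + 1 + 2)) / (kr + 1) by
          field_simp, le_div_iff₀ hmr0]
        nlinarith only [hkr1]
      have hu0 : (0 : ℝ) ≤ 2 / (kr + 1) := div_nonneg (by norm_num) (by linarith only [hkr1])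
      have hApq : p ≤ p' * (1 + 2 / (kr + 1)) := by
        have h1 : p ≤ (kr * (1 + 2 / (kr + 1))) ^ ((1 : ℝ) / 4) := by
          rw [hp]; exact Real.rpow_le_rpow hmr0.le hkey0 (by norm_num)
        have h2 : (kr * (1 + 2 / (kr + 1))) ^ ((1 : ℝ) / 4)
            = p' * (1 + 2 / (kr + 1)) ^ ((1 : ℝ) / 4) := by
          rw [hp']; exact Real.mul_rpow (by linarith only [hkr1]) (by linarith only [hu0])
        have h3 : (1 + 2 / (kr + 1)) ^ ((1 : ℝ) / 4) ≤ 1 + 2 / (kr + 1) := by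
          nth_rewrite 2 [show (1 + 2 / (kr + 1)) = (1 + 2 / (kr + 1)) ^ (1 : ℝ) by
            rw [Real.rpow_one]]
          exact Real.rpow_le_rpow_of_exponent_le (by linarith only [hu0]) (by norm_num)
        calc p ≤ p' * (1 + 2 / (kr + 1)) ^ ((1 : ℝ) / 4) := by rw [← h2]; exact h1
          _ ≤ p' * (1 + 2 / (kr + 1)) := mul_le_mul_of_nonneg_left h3 hp'0.le
      have hu1 : 2 / (kr + 1) ≤ 1 := by rw [div_le_one hmr0]; linarith only [hkr1]
      have hF : p ≤ 2 * p' := by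
        have h := mul_le_mul_of_nonneg_left hu1 hp'0.le
        linarith only [hApq, h]
      -- u ≤ t/2 where u = 2/(kr+1), t = μ1*A/s
      have hut : 2 / (kr + 1) ≤ (μ1 * A / s) / 2 := by
        rw [div_le_div_iff₀ hmr0 (by norm_num : (0:ℝ) < 2), div_mul_eq_mul_div,
          le_div_iff₀ hs0]
        have hms : μ1 * A * (kr + 1) = μ1 * A * (s * s) := by rw [hss]
        have h := mul_le_mul_of_nonneg_right hB4 hs0.le
        linarith only [h, hms]
      -- (I)
      have hI0 : (1 - μ1 * A / s) * p ≤ (1 - μ1 * A / (2 * s)) * p' := by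
        have hkey : (1 - μ1 * A / s) * (1 + 2 / (kr + 1)) ≤ 1 - μ1 * A / (2 * s) := by
          have e : μ1 * A / (2 * s) = (μ1 * A / s) / 2 := by ring
          rw [e]
          nlinarith only [hut, mul_nonneg ht0 hu0, ht12, hu0]
        calc (1 - μ1 * A / s) * p ≤ (1 - μ1 * A / s) * (p' * (1 + 2 / (kr + 1))) :=
              mul_le_mul_of_nonneg_left hApq (by linarith only [ht12])
          _ = ((1 - μ1 * A / s) * (1 + 2 / (kr + 1))) * p' := by ring
          _ ≤ (1 - μ1 * A / (2 * s)) * p' := mul_le_mul_of_nonneg_right hkey hp'0.le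
      have hI : (1 - μ1 * A / s) * (L / p') ≤ (1 - μ1 * A / (2 * s)) * (L / p) := by
        have h1 : (1 - μ1 * A / s) / p' ≤ (1 - μ1 * A / (2 * s)) / p := by
          rw [div_le_div_iff₀ hp'0 hp0]; exact hI0
        have h2 := mul_le_mul_of_nonneg_left h1 hL0.le
        calc (1 - μ1 * A / s) * (L / p') = L * ((1 - μ1 * A / s) / p') := by ring
          _ ≤ L * ((1 - μ1 * A / (2 * s)) / p) := h2
          _ = (1 - μ1 * A / (2 * s)) * (L / p) := by ring
      -- (IIa)
      have hIIa : (μ1 / s) * (Lp / p') ≤ (μ1 * A / (4 * s)) * (L / p) := by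
        have e1 : (μ1 / s) * (Lp / p') = (μ1 * Lp) / (s * p') := by ring
        have e2 : (μ1 * A / (4 * s)) * (L / p) = (μ1 * A * L) / (4 * (s * p)) := by ring
        rw [e1, e2, div_le_div_iff₀ (by positivity) (by positivity)]
        have h1 := mul_le_mul_of_nonneg_left hF (by positivity : (0:ℝ) ≤ 4 * μ1 * Lp * s)
        have h2 := mul_le_mul_of_nonneg_right hALp (by positivity : (0:ℝ) ≤ μ1 * s * p')
        linarith only [h1, h2]
      -- (IIb)
      have hIIb : C' * μ1 ^ 2 / (s * st) ≤ (μ1 * A / (4 * s)) * (L / p) := by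
        have e2 : (μ1 * A / (4 * s)) * (L / p) = (μ1 * A * L) / (4 * (s * p)) := by ring
        rw [e2, div_le_div_iff₀ (by positivity) (by positivity), ← hpp]
        have hst' : p * p / 2 ≤ st := by rw [← hpp] at hsthalf; linarith only [hsthalf]
        have hppge : p ≤ p * p := by
          have h := mul_nonneg (by linarith only [hp1] : (0:ℝ) ≤ p - 1) hp0.le
          nlinarith only [h]
        have h3 := mul_le_mul_of_nonneg_right hALC
          (by positivity : (0:ℝ) ≤ μ1 * (p * p) * (p * p) / 2)
        have h4 := mul_le_mul_of_nonneg_left hst'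
          (mul_nonneg (mul_nonneg (mul_nonneg hμ1.le hA.le) hL0.le)
            (mul_nonneg hp0.le hp0.le))
        have h6 := mul_le_mul_of_nonneg_left hppge
          (by positivity : (0:ℝ) ≤ 4 * C' * μ1 ^ 2 * (p * p))
        linarith only [h3, h4, h6]
      -- combine
      have hak := ha k hk1
      have hak2 : a k ≤ Lp / p' := by rw [hp', hkr]; exact hak.2
      have hμs0 : 0 ≤ μ1 / s := by positivity
      have hLp'0 : 0 ≤ L / p' := by positivity
      have t1 : (1 - (μ1 / s) * (β1 / p) - (μ1 / s) * A) * b k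
          ≤ (1 - μ1 * A / s) * (L / p') := by
        calc (1 - (μ1 / s) * (β1 / p) - (μ1 / s) * A) * b k
            ≤ (1 - (μ1 / s) * (β1 / p) - (μ1 / s) * A) * (L / p') :=
              mul_le_mul_of_nonneg_left ih hc0
          _ ≤ (1 - μ1 * A / s) * (L / p') := mul_le_mul_of_nonneg_right hc1 hLp'0
      have t2 : (μ1 / s) * a k ≤ (μ1 / s) * (Lp / p') := mul_le_mul_of_nonneg_left hak2 hμs0
      have t3 : C' * (μ1 / s) * (μ1 / st) = C' * μ1 ^ 2 / (s * st) := by ring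
      have final : (1 - μ1 * A / (2 * s)) * (L / p) + (μ1 * A / (4 * s)) * (L / p)
          + (μ1 * A / (4 * s)) * (L / p) = L / p := by ring
      linarith only [hrek, t1, t2, t3, hI, hIIa, hIIb, final]
  intro k hk1
  rcases le_or_gt K k with h | h
  · exact main k h
  · exact hbase k hk1 h.le
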